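/- arXiv:1007.0309 — 2 statements merged into one kernel-verified Lean document; each statement's English description precedes it below -/
import Mathlib

section
/- Let Ω be a measurable set, p > 2, and w ∈ L^2(Ω) ∩ L^p(Ω) with ‖w‖_{L^2(Ω)} > 0. Then ∫_Ω |w|^2 log(|w|^2/‖w‖_{L^2(Ω)}^2) dx ≤ (p/(p-2)) · ‖w‖_{L^2(Ω)}^2 · log(‖w‖_{L^p(Ω)}^2/‖w‖_{L^2(Ω)}^2). -/
open MeasureTheory

/-- For `p > 2` and `w ∈ L² ∩ L^p(Ω)` with `‖w‖₂ > 0`,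
`∫_Ω |w|² log(|w|²/‖w‖₂²) ≤ (p/(p-2)) ‖w‖₂² log(‖w‖_p²/‖w‖₂²)`. -/
theorem stmt5 (d : ℕ) (Ω : Set (EuclideanSpace ℝ (Fin d))) (hΩ : MeasurableSet Ω)
    (p : ℝ) (hp : 2 < p) (w : EuclideanSpace ℝ (Fin d) → ℝ)
    (hw2 : MemLp w (ENNReal.ofReal 2) (volume.restrict Ω))
    (hwp : MemLp w (ENNReal.ofReal p) (volume.restrict Ω))
    (hne : 0 < (eLpNorm w (ENNReal.ofReal 2) (volume.restrict Ω)).toReal)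
    (hint : Integrable
      (fun x => (w x) ^ 2 *
        Real.log ((w x) ^ 2 / ((eLpNorm w (ENNReal.ofReal 2) (volume.restrict Ω)).toReal) ^ 2))
      (volume.restrict Ω)) :
    ∫ x in Ω, (w x) ^ 2 *
        Real.log ((w x) ^ 2 / ((eLpNorm w (ENNReal.ofReal 2) (volume.restrict Ω)).toReal) ^ 2) ≤
      p / (p - 2) * ((eLpNorm w (ENNReal.ofReal 2) (volume.restrict Ω)).toReal) ^ 2 *
        Real.log (((eLpNorm w (ENNReal.ofReal p) (volume.restrict Ω)).toReal) ^ 2 /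
          ((eLpNorm w (ENNReal.ofReal 2) (volume.restrict Ω)).toReal) ^ 2) := by
  set μ := volume.restrict Ω with hμ
  set M := (eLpNorm w (ENNReal.ofReal 2) μ).toReal with hMdef
  set N := (eLpNorm w (ENNReal.ofReal p) μ).toReal with hNdef
  have hp0 : (0:ℝ) < p := by linarith
  have hp2 : (0:ℝ) < p - 2 := by linarith
  have h2t : (ENNReal.ofReal 2).toReal = 2 := ENNReal.toReal_ofReal (by norm_num)
  have hpt : (ENNReal.ofReal p).toReal = p := ENNReal.toReal_ofReal hp0.le
  have h2ne : (ENNReal.ofReal 2) ≠ 0 := by simp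
  have h2top : (ENNReal.ofReal 2) ≠ ⊤ := ENNReal.ofReal_ne_top
  have hpne : (ENNReal.ofReal p) ≠ 0 := by
    simp [ENNReal.ofReal_eq_zero]; linarith
  have hptop : (ENNReal.ofReal p) ≠ ⊤ := ENNReal.ofReal_ne_top
  have hM : 0 < M := hne
  -- integrability of ‖w‖^2 and ‖w‖^p
  have hi2 : Integrable (fun x => ‖w x‖ ^ ((2:ℝ))) μ := by
    have := hw2.integrable_norm_rpow h2ne h2top
    rwa [h2t] at this
  have hip : Integrable (fun x => ‖w x‖ ^ p) μ := by
    have := hwp.integrable_norm_rpow hpne hptop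
    rwa [hpt] at this
  have habs : ∀ x, ‖w x‖ ^ ((2:ℝ)) = (w x) ^ 2 := by
    intro x
    rw [show ((2:ℝ)) = ((2:ℕ):ℝ) from by norm_num, Real.rpow_natCast,
      Real.norm_eq_abs, sq_abs]
  have hi2' : Integrable (fun x => (w x) ^ 2) μ :=
    hi2.congr (Filter.Eventually.of_forall fun x => habs x)
  -- values of the norms as integrals
  have hM2 : M ^ 2 = ∫ x, (w x) ^ 2 ∂μ := by
    have h := hw2.eLpNorm_eq_integral_rpow_norm h2ne h2top
    have hi2nn : 0 ≤ ∫ x, ‖w x‖ ^ ((2:ℝ)) ∂μ :=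
      integral_nonneg fun x => Real.rpow_nonneg (norm_nonneg _) _
    have : M = (∫ x, ‖w x‖ ^ ((2:ℝ)) ∂μ) ^ ((2:ℝ)⁻¹) := by
      rw [hMdef, h, h2t, ENNReal.toReal_ofReal (Real.rpow_nonneg hi2nn _)]
    rw [this, ← Real.rpow_natCast ((∫ x, ‖w x‖ ^ ((2:ℝ)) ∂μ) ^ ((2:ℝ)⁻¹)) 2,
      ← Real.rpow_mul hi2nn]
    push_cast
    rw [inv_mul_cancel₀ (by norm_num : (2:ℝ) ≠ 0), Real.rpow_one]
    exact integral_congr_ae (Filter.Eventually.of_forall fun x => habs x)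
  have hNp : N ^ p = ∫ x, ‖w x‖ ^ p ∂μ := by
    have h := hwp.eLpNorm_eq_integral_rpow_norm hpne hptop
    have hipnn : 0 ≤ ∫ x, ‖w x‖ ^ p ∂μ :=
      integral_nonneg fun x => Real.rpow_nonneg (norm_nonneg _) _
    have : N = (∫ x, ‖w x‖ ^ p ∂μ) ^ p⁻¹ := by
      rw [hNdef, h, hpt, ENNReal.toReal_ofReal (Real.rpow_nonneg hipnn _)]
    rw [this, ← Real.rpow_mul hipnn, inv_mul_cancel₀ hp0.ne', Real.rpow_one]
  -- N > 0
  have hN : 0 < N := by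
    rcases eq_or_lt_of_le (ENNReal.toReal_nonneg (a := eLpNorm w (ENNReal.ofReal p) μ)) with h | h
    · exfalso
      have h0 : eLpNorm w (ENNReal.ofReal p) μ = 0 := by
        have := hwp.2
        rcases (ENNReal.toReal_eq_zero_iff _).mp h.symm with h' | h'
        · exact h'
        · exact absurd h' this.ne
      have hw0 : w =ᵐ[μ] 0 := (eLpNorm_eq_zero_iff hwp.1 hpne).mp h0
      have : eLpNorm w (ENNReal.ofReal 2) μ = 0 := by
        rw [eLpNorm_congr_ae hw0, eLpNorm_zero]
      rw [hMdef, this] at hM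
      simp at hM
    · exact h
  set I : ℝ := N ^ p / M ^ p with hIdef
  have hI : 0 < I := div_pos (Real.rpow_pos_of_pos hN p) (Real.rpow_pos_of_pos hM p)
  set c1 : ℝ := 2 / (p - 2) / (M ^ (p - 2) * I) with hc1def
  set c2 : ℝ := 2 / (p - 2) * (Real.log I - 1) with hc2def
  have hMp2 : (0:ℝ) < M ^ (p - 2) := Real.rpow_pos_of_pos hM _
  -- pointwise bound
  have hpt_bd : ∀ x, (w x) ^ 2 * Real.log ((w x) ^ 2 / M ^ 2) ≤
      c1 * ‖w x‖ ^ p + c2 * (w x) ^ 2 := by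
    intro x
    rcases eq_or_ne (w x) 0 with h0 | h0
    · simp [h0, Real.zero_rpow hp0.ne']
    · set a : ℝ := ‖w x‖ with hadef
      have ha : 0 < a := norm_pos_iff.mpr h0
      have haw : (w x) ^ 2 = a ^ 2 := by rw [hadef, Real.norm_eq_abs, sq_abs]
      set t : ℝ := (a / M) ^ (p - 2) with htdef
      have ht : 0 < t := Real.rpow_pos_of_pos (div_pos ha hM) _
      have hlogt : Real.log t = (p - 2) * Real.log (a / M) := Real.log_rpow (div_pos ha hM) _
      have hlhs : Real.log ((w x) ^ 2 / M ^ 2) = 2 / (p - 2) * Real.log t := by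
        rw [haw, hlogt, Real.log_div (pow_ne_zero _ ha.ne') (pow_ne_zero _ hM.ne'),
          Real.log_pow, Real.log_pow, Real.log_div ha.ne' hM.ne']
        push_cast
        field_simp
      have hkey : Real.log t ≤ t / I + Real.log I - 1 := by
        have := Real.log_le_sub_one_of_pos (div_pos ht hI)
        rw [Real.log_div ht.ne' hI.ne'] at this
        linarith
      have hap : a ^ p = a ^ 2 * a ^ (p - 2) := by
        rw [← Real.rpow_natCast a 2, ← Real.rpow_add ha]
        congr 1
        push_cast
        ring
      have htp : a ^ 2 * (t / I) = a ^ p / (M ^ (p - 2) * I) := by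
        rw [htdef, Real.div_rpow ha.le hM.le, hap]
        field_simp
      calc (w x) ^ 2 * Real.log ((w x) ^ 2 / M ^ 2)
          = 2 / (p - 2) * (a ^ 2 * Real.log t) := by rw [hlhs, haw]; ring
        _ ≤ 2 / (p - 2) * (a ^ 2 * (t / I + Real.log I - 1)) := by
            apply mul_le_mul_of_nonneg_left _ (by positivity)
            apply mul_le_mul_of_nonneg_left hkey (by positivity)
        _ = 2 / (p - 2) * (a ^ 2 * (t / I)) + c2 * a ^ 2 := by rw [hc2def]; ring
        _ = c1 * a ^ p + c2 * a ^ 2 := by rw [htp, hc1def]; ring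
        _ = c1 * ‖w x‖ ^ p + c2 * (w x) ^ 2 := by rw [haw, hadef]
  -- integrate
  have hRHSint : Integrable (fun x => c1 * ‖w x‖ ^ p + c2 * (w x) ^ 2) μ :=
    (hip.const_mul c1).add (hi2'.const_mul c2)
  have hmono : ∫ x, (w x) ^ 2 * Real.log ((w x) ^ 2 / M ^ 2) ∂μ ≤
      ∫ x, (c1 * ‖w x‖ ^ p + c2 * (w x) ^ 2) ∂μ :=
    integral_mono_ae hint hRHSint (Filter.Eventually.of_forall hpt_bd)
  have hRHSval : ∫ x, (c1 * ‖w x‖ ^ p + c2 * (w x) ^ 2) ∂μ = c1 * N ^ p + c2 * M ^ 2 := by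
    rw [integral_add (hip.const_mul c1) (hi2'.const_mul c2), integral_const_mul,
      integral_const_mul, hM2, hNp]
  -- simplify the right-hand side value
  have hc1N : c1 * N ^ p = 2 / (p - 2) * M ^ 2 := by
    rw [hc1def, hIdef]
    have hNpne : N ^ p ≠ 0 := (Real.rpow_pos_of_pos hN p).ne'
    have hMp : M ^ p = M ^ (p - 2) * M ^ 2 := by
      rw [← Real.rpow_natCast M 2, ← Real.rpow_add hM]
      congr 1
      push_cast
      ring
    field_simp
    rw [hMp]
  have hlogI : Real.log I = p / 2 * Real.log (N ^ 2 / M ^ 2) := by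
    rw [hIdef, Real.log_div (Real.rpow_pos_of_pos hN p).ne' (Real.rpow_pos_of_pos hM p).ne',
      Real.log_rpow hN, Real.log_rpow hM,
      Real.log_div (pow_ne_zero _ hN.ne') (pow_ne_zero _ hM.ne'),
      Real.log_pow, Real.log_pow]
    push_cast
    ring
  have hfinal : c1 * N ^ p + c2 * M ^ 2 =
      p / (p - 2) * M ^ 2 * Real.log (N ^ 2 / M ^ 2) := by
    rw [hc1N, hc2def, hlogI]
    field_simp
    ring
  calc ∫ x, (w x) ^ 2 * Real.log ((w x) ^ 2 / M ^ 2) ∂μ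
      ≤ ∫ x, (c1 * ‖w x‖ ^ p + c2 * (w x) ^ 2) ∂μ := hmono
    _ = c1 * N ^ p + c2 * M ^ 2 := hRHSval
    _ = p / (p - 2) * M ^ 2 * Real.log (N ^ 2 / M ^ 2) := hfinal
end

section
/- Let d ≥ 3, u a smooth positive radial solution of -u'' - ((d-1)/r)u' + u - u^{p-1} = 0 with sufficient decay, and set x₂ = ∫₀^∞|u'|²r^{d+1}dr, y₀ = ∫₀^∞|u|²r^{d-1}dr, y₂ = ∫₀^∞|u|²r^{d+1}dr, z₂ = ∫₀^∞|u|^p r^{d+1}dr. Then x₂ - d·y₀ + y₂ - z₂ = 0 and ((d-4)/2)x₂ + ((d+2)/2)y₂ - ((d+2)/p)z₂ = 0. -/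
open MeasureTheory Set Filter

private lemma decay_integrable' {g : ℝ → ℝ} (hg : Continuous g) {A a : ℝ} (ha : 0 < a)
    (hbd : ∀ r : ℝ, 0 ≤ r → |g r| ≤ A * Real.exp (-a * r)) (n : ℕ) :
    IntegrableOn (fun r => g r * r ^ n) (Set.Ioi (0 : ℝ)) := by
  have hbase : IntegrableOn (fun x : ℝ => x ^ (n : ℝ) * Real.exp (-a * x)) (Set.Ioi 0) := by
    have h := integrableOn_rpow_mul_exp_neg_mul_rpow (s := (n : ℝ)) (p := 1)
      (lt_of_lt_of_le (by norm_num) (Nat.cast_nonneg n)) (by norm_num) ha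
    simpa using h
  refine ((hbase.const_mul A).mono' ((hg.mul (continuous_pow n)).aestronglyMeasurable.restrict) ?_)
  filter_upwards [ae_restrict_mem measurableSet_Ioi] with r hr
  have hr0 : (0:ℝ) < r := hr
  calc ‖g r * r ^ n‖ = |g r| * r ^ n := by
        rw [Real.norm_eq_abs, abs_mul, abs_of_nonneg (pow_nonneg hr0.le n)]
    _ ≤ (A * Real.exp (-a * r)) * r ^ n :=
        mul_le_mul_of_nonneg_right (hbd r hr0.le) (pow_nonneg hr0.le n)
    _ = A * (r ^ (n : ℝ) * Real.exp (-a * r)) := by rw [Real.rpow_natCast]; ring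

private lemma decay_tendsto' {g : ℝ → ℝ} {A a : ℝ} (ha : 0 < a)
    (hbd : ∀ r : ℝ, 0 ≤ r → |g r| ≤ A * Real.exp (-a * r)) (n : ℕ) :
    Tendsto (fun r => g r * r ^ n) atTop (nhds 0) := by
  have h0 : Tendsto (fun x : ℝ => A * (x ^ (n : ℝ) * Real.exp (-a * x))) atTop (nhds (A * 0)) :=
    (tendsto_rpow_mul_exp_neg_mul_atTop_nhds_zero (n : ℝ) a ha).const_mul A
  rw [mul_zero] at h0
  refine squeeze_zero_norm' ?_ h0
  filter_upwards [eventually_ge_atTop (0:ℝ)] with r hr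
  calc ‖g r * r ^ n‖ = |g r| * r ^ n := by
        rw [Real.norm_eq_abs, abs_mul, abs_of_nonneg (pow_nonneg hr n)]
    _ ≤ (A * Real.exp (-a * r)) * r ^ n :=
        mul_le_mul_of_nonneg_right (hbd r hr) (pow_nonneg hr n)
    _ = A * (r ^ (n : ℝ) * Real.exp (-a * r)) := by rw [Real.rpow_natCast]; ring

/-- For a positive radial ground state `u` of `-u'' - ((d-1)/r)u' + u - u^{p-1} = 0`
(`d ≥ 3`, `p ∈ (2, 2d/(d-2))`), with exponential decay of `u, u'` and `u'(0) = 0`,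
the integrals `x₂ = ∫ u'² r^{d+1}`, `y₀ = ∫ u² r^{d-1}`, `y₂ = ∫ u² r^{d+1}`,
`z₂ = ∫ u^p r^{d+1}` satisfy `x₂ - d y₀ + y₂ - z₂ = 0` and
`((d-4)/2)x₂ + ((d+2)/2)y₂ - ((d+2)/p)z₂ = 0`. -/
theorem stmt13 (d : ℕ) (hd : 3 ≤ d) (p : ℝ) (hp : 2 < p) (hp2 : p < 2 * d / ((d : ℝ) - 2))
    (u : ℝ → ℝ) (hu : ContDiff ℝ 2 u) (hpos : ∀ r : ℝ, 0 < r → 0 < u r)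
    (hODE : ∀ r : ℝ, 0 < r →
      -(deriv (deriv u) r) - (((d : ℝ) - 1) / r) * deriv u r + u r - u r ^ (p - 1) = 0)
    (hu'0 : deriv u 0 = 0)
    (hdecay : ∃ C > (0 : ℝ), ∃ c > (0 : ℝ),
      ∀ r : ℝ, 0 ≤ r → |u r| + |deriv u r| ≤ C * Real.exp (-c * r)) :
    (∫ r in Set.Ioi (0 : ℝ), (deriv u r) ^ 2 * r ^ (d + 1)) -
        (d : ℝ) * (∫ r in Set.Ioi (0 : ℝ), (u r) ^ 2 * r ^ (d - 1)) +
        (∫ r in Set.Ioi (0 : ℝ), (u r) ^ 2 * r ^ (d + 1)) -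
        (∫ r in Set.Ioi (0 : ℝ), u r ^ p * r ^ (d + 1)) = 0 ∧
    (((d : ℝ) - 4) / 2) * (∫ r in Set.Ioi (0 : ℝ), (deriv u r) ^ 2 * r ^ (d + 1)) +
        (((d : ℝ) + 2) / 2) * (∫ r in Set.Ioi (0 : ℝ), (u r) ^ 2 * r ^ (d + 1)) -
        (((d : ℝ) + 2) / p) * (∫ r in Set.Ioi (0 : ℝ), u r ^ p * r ^ (d + 1)) = 0 := by
  obtain ⟨k, rfl⟩ : ∃ k, d = k + 1 := ⟨d - 1, by omega⟩
  simp only [Nat.add_sub_cancel]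
  obtain ⟨C, hC, c, hc, hdec⟩ := hdecay
  have hp0 : (0:ℝ) < p := by linarith
  -- smoothness facts
  have hu1 : Differentiable ℝ u := hu.differentiable (by norm_num)
  have huc : Continuous u := hu1.continuous
  have hu2 : ContDiff ℝ (1 + 1 : ℕ) u := by exact_mod_cast hu
  have hdu : ContDiff ℝ 1 (deriv u) := (contDiff_succ_iff_deriv.mp (by exact_mod_cast hu2)).2.2
  have hv1 : Differentiable ℝ (deriv u) := hdu.differentiable (by norm_num)
  have hvc : Continuous (deriv u) := hdu.continuous
  have dU : ∀ r : ℝ, HasDerivAt u (deriv u r) r := fun r => (hu1 r).hasDerivAt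
  have dV : ∀ r : ℝ, HasDerivAt (deriv u) (deriv (deriv u) r) r := fun r => (hv1 r).hasDerivAt
  have hode : ∀ r : ℝ, 0 < r →
      deriv (deriv u) r = u r - u r ^ (p - 1) - ((k : ℝ) / r) * deriv u r := by
    intro r hr
    have h := hODE r hr
    push_cast at h
    have h2 : ((k:ℝ) + 1 - 1) = (k:ℝ) := by ring
    rw [h2] at h
    linarith
  have hup : ∀ r : ℝ, 0 < r → u r ^ p = u r ^ (p - 1) * u r := by
    intro r hr
    have h := Real.rpow_add_one (x := u r) (hpos r hr).ne' (p - 1)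
    have hpe : p - 1 + 1 = p := by ring
    rw [hpe] at h
    exact h
  -- nonnegativity of u on [0, ∞)
  have hu0 : ∀ r : ℝ, 0 ≤ r → 0 ≤ u r := by
    intro r hr
    rcases eq_or_lt_of_le hr with h | h
    · have ht : Tendsto u (nhdsWithin (0:ℝ) (Ioi 0)) (nhds (u 0)) :=
        huc.continuousAt.continuousWithinAt
      have h0 : (0:ℝ) ≤ u 0 :=
        ge_of_tendsto ht (eventually_nhdsWithin_of_forall fun x hx => (hpos x hx).le)
      rw [← h]; exact h0
    · exact (hpos r h).le
  -- decay bounds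
  have hbu : ∀ r : ℝ, 0 ≤ r → |u r| ≤ C * Real.exp (-c * r) :=
    fun r hr => le_trans (le_add_of_nonneg_right (abs_nonneg _)) (hdec r hr)
  have hbv : ∀ r : ℝ, 0 ≤ r → |deriv u r| ≤ C * Real.exp (-c * r) :=
    fun r hr => le_trans (le_add_of_nonneg_left (abs_nonneg _)) (hdec r hr)
  have hc2 : (0:ℝ) < 2 * c := by linarith
  have hcp : (0:ℝ) < c * p := mul_pos hc hp0
  have hexp2 : ∀ r : ℝ, Real.exp (-c * r) * Real.exp (-c * r) = Real.exp (-(2 * c) * r) := by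
    intro r; rw [← Real.exp_add]; congr 1; ring
  have hb2 : ∀ f1 f2 : ℝ → ℝ, (∀ r : ℝ, 0 ≤ r → |f1 r| ≤ C * Real.exp (-c * r)) →
      (∀ r : ℝ, 0 ≤ r → |f2 r| ≤ C * Real.exp (-c * r)) →
      ∀ r : ℝ, 0 ≤ r → |f1 r * f2 r| ≤ C ^ 2 * Real.exp (-(2 * c) * r) := by
    intro f1 f2 hf1 hf2 r hr
    calc |f1 r * f2 r| = |f1 r| * |f2 r| := abs_mul _ _
      _ ≤ (C * Real.exp (-c * r)) * (C * Real.exp (-c * r)) :=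
          mul_le_mul (hf1 r hr) (hf2 r hr) (abs_nonneg _) (by positivity)
      _ = C ^ 2 * Real.exp (-(2 * c) * r) := by rw [← hexp2 r]; ring
  have hb_v2 : ∀ r : ℝ, 0 ≤ r → |(deriv u r) ^ 2| ≤ C ^ 2 * Real.exp (-(2 * c) * r) := by
    intro r hr; rw [sq]; exact hb2 _ _ hbv hbv r hr
  have hb_u2 : ∀ r : ℝ, 0 ≤ r → |(u r) ^ 2| ≤ C ^ 2 * Real.exp (-(2 * c) * r) := by
    intro r hr; rw [sq]; exact hb2 _ _ hbu hbu r hr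
  have hb_vu : ∀ r : ℝ, 0 ≤ r → |deriv u r * u r| ≤ C ^ 2 * Real.exp (-(2 * c) * r) :=
    hb2 _ _ hbv hbu
  have hb_up : ∀ r : ℝ, 0 ≤ r → |u r ^ p| ≤ C ^ p * Real.exp (-(c * p) * r) := by
    intro r hr
    rw [abs_of_nonneg (Real.rpow_nonneg (hu0 r hr) p)]
    have h1 : u r ≤ C * Real.exp (-c * r) := (le_abs_self _).trans (hbu r hr)
    calc u r ^ p ≤ (C * Real.exp (-c * r)) ^ p := Real.rpow_le_rpow (hu0 r hr) h1 hp0.le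
      _ = C ^ p * Real.exp (-(c * p) * r) := by
          rw [Real.mul_rpow hC.le (Real.exp_nonneg _), ← Real.exp_mul,
            show -c * r * p = -(c * p) * r by ring]
  have hcup : Continuous fun r => u r ^ p := by
    rw [continuous_iff_continuousAt]
    intro r
    exact (Real.continuousAt_rpow_const (u r) p (Or.inr hp0.le)).comp huc.continuousAt
  -- integrability
  have hI_v2 : ∀ n : ℕ, IntegrableOn (fun r => (deriv u r) ^ 2 * r ^ n) (Ioi (0:ℝ)) :=
    fun n => decay_integrable' (hvc.pow 2) hc2 hb_v2 n
  have hI_u2 : ∀ n : ℕ, IntegrableOn (fun r => (u r) ^ 2 * r ^ n) (Ioi (0:ℝ)) :=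
    fun n => decay_integrable' (huc.pow 2) hc2 hb_u2 n
  have hI_up : ∀ n : ℕ, IntegrableOn (fun r => u r ^ p * r ^ n) (Ioi (0:ℝ)) :=
    fun n => decay_integrable' hcup hcp hb_up n
  -- ### identity 1
  have hder₁ : ∀ r ∈ Ioi (0:ℝ), HasDerivAt
      (fun r => deriv u r * u r * r ^ (k+1+1) - (u r) ^ 2 * r ^ (k+1))
      ((deriv u r) ^ 2 * r ^ (k+1+1) - ((k:ℝ)+1) * ((u r) ^ 2 * r ^ k)
        + (u r) ^ 2 * r ^ (k+1+1) - u r ^ p * r ^ (k+1+1)) r := by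
    intro r hr
    have hr0 : (0:ℝ) < r := hr
    have h1 := (((dV r).mul (dU r)).mul (hasDerivAt_pow (k+1+1) r))
    have h2 := (((dU r).pow 2).mul (hasDerivAt_pow (k+1) r))
    have h := h1.sub h2
    refine h.congr_deriv ?_
    rw [hode r hr0, hup r hr0]
    simp only [Nat.add_sub_cancel, pow_one, Pi.mul_apply, Pi.pow_apply]
    push_cast
    field_simp
    ring
  have hcont₁ : ContinuousWithinAt
      (fun r : ℝ => deriv u r * u r * r ^ (k+1+1) - (u r) ^ 2 * r ^ (k+1)) (Ici 0) 0 :=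
    (((hvc.mul huc).mul (continuous_pow _)).sub
      ((huc.pow 2).mul (continuous_pow _))).continuousWithinAt
  have hint₁ : IntegrableOn (fun r => (deriv u r) ^ 2 * r ^ (k+1+1)
      - ((k:ℝ)+1) * ((u r) ^ 2 * r ^ k)
      + (u r) ^ 2 * r ^ (k+1+1) - u r ^ p * r ^ (k+1+1)) (Ioi (0:ℝ)) :=
    (((hI_v2 _).sub ((hI_u2 k).const_mul _)).add (hI_u2 _)).sub (hI_up _)
  have htend₁ : Tendsto
      (fun r : ℝ => deriv u r * u r * r ^ (k+1+1) - (u r) ^ 2 * r ^ (k+1)) atTop (nhds 0) := by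
    have t1 := decay_tendsto' hc2 hb_vu (k+1+1)
    have t2 := decay_tendsto' hc2 hb_u2 (k+1)
    simpa using t1.sub t2
  have I₁ := integral_Ioi_of_hasDerivAt_of_tendsto hcont₁ hder₁ hint₁ htend₁
  have J₁ : (∫ r in Ioi (0:ℝ), ((deriv u r) ^ 2 * r ^ (k+1+1)
      - ((k:ℝ)+1) * ((u r) ^ 2 * r ^ k)
      + (u r) ^ 2 * r ^ (k+1+1) - u r ^ p * r ^ (k+1+1))) = 0 := by
    rw [I₁]
    norm_num
  have D₁ : (∫ r in Ioi (0:ℝ), ((deriv u r) ^ 2 * r ^ (k+1+1)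
      - ((k:ℝ)+1) * ((u r) ^ 2 * r ^ k)
      + (u r) ^ 2 * r ^ (k+1+1) - u r ^ p * r ^ (k+1+1)))
      = (∫ r in Ioi (0:ℝ), (deriv u r) ^ 2 * r ^ (k+1+1))
        - ((k:ℝ)+1) * (∫ r in Ioi (0:ℝ), (u r) ^ 2 * r ^ k)
        + (∫ r in Ioi (0:ℝ), (u r) ^ 2 * r ^ (k+1+1))
        - (∫ r in Ioi (0:ℝ), u r ^ p * r ^ (k+1+1)) := by
    have h1 : (∫ r in Ioi (0:ℝ), ((deriv u r) ^ 2 * r ^ (k+1+1)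
        - ((k:ℝ)+1) * ((u r) ^ 2 * r ^ k)
        + (u r) ^ 2 * r ^ (k+1+1) - u r ^ p * r ^ (k+1+1)))
        = (∫ r in Ioi (0:ℝ), ((deriv u r) ^ 2 * r ^ (k+1+1)
            - ((k:ℝ)+1) * ((u r) ^ 2 * r ^ k) + (u r) ^ 2 * r ^ (k+1+1)))
          - ∫ r in Ioi (0:ℝ), u r ^ p * r ^ (k+1+1) :=
      integral_sub (((hI_v2 _).sub ((hI_u2 k).const_mul _)).add (hI_u2 _)) (hI_up _)
    have h2 : (∫ r in Ioi (0:ℝ), ((deriv u r) ^ 2 * r ^ (k+1+1)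
        - ((k:ℝ)+1) * ((u r) ^ 2 * r ^ k) + (u r) ^ 2 * r ^ (k+1+1)))
        = (∫ r in Ioi (0:ℝ), ((deriv u r) ^ 2 * r ^ (k+1+1)
            - ((k:ℝ)+1) * ((u r) ^ 2 * r ^ k)))
          + ∫ r in Ioi (0:ℝ), (u r) ^ 2 * r ^ (k+1+1) :=
      integral_add ((hI_v2 _).sub ((hI_u2 k).const_mul _)) (hI_u2 _)
    have h3 : (∫ r in Ioi (0:ℝ), ((deriv u r) ^ 2 * r ^ (k+1+1)
        - ((k:ℝ)+1) * ((u r) ^ 2 * r ^ k)))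
        = (∫ r in Ioi (0:ℝ), (deriv u r) ^ 2 * r ^ (k+1+1))
          - ∫ r in Ioi (0:ℝ), ((k:ℝ)+1) * ((u r) ^ 2 * r ^ k) :=
      integral_sub (hI_v2 _) ((hI_u2 k).const_mul _)
    have h4 : (∫ r in Ioi (0:ℝ), ((k:ℝ)+1) * ((u r) ^ 2 * r ^ k))
        = ((k:ℝ)+1) * ∫ r in Ioi (0:ℝ), (u r) ^ 2 * r ^ k := integral_const_mul _ _
    rw [h1, h2, h3, h4]
  rw [D₁] at J₁
  -- ### identity 2
  have hder₂ : ∀ r ∈ Ioi (0:ℝ), HasDerivAt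
      (fun r => (1/2) * (deriv u r ^ 2 * r ^ (k+3)) - (1/2) * (u r ^ 2 * r ^ (k+3))
        + (1/p) * (u r ^ p * r ^ (k+3)))
      (((4 - ((k:ℝ)+1))/2) * (deriv u r ^ 2 * r ^ (k+1+1))
        - (((k:ℝ)+3)/2) * (u r ^ 2 * r ^ (k+1+1))
        + (((k:ℝ)+3)/p) * (u r ^ p * r ^ (k+1+1))) r := by
    intro r hr
    have hr0 : (0:ℝ) < r := hr
    have h1 := HasDerivAt.const_mul ((1:ℝ)/2) (((dV r).pow 2).mul (hasDerivAt_pow (k+3) r))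
    have h2 := HasDerivAt.const_mul ((1:ℝ)/2) (((dU r).pow 2).mul (hasDerivAt_pow (k+3) r))
    have h3 := HasDerivAt.const_mul ((1:ℝ)/p)
      (((dU r).rpow_const (p := p) (Or.inl (hpos r hr0).ne')).mul (hasDerivAt_pow (k+3) r))
    have h := (h1.sub h2).add h3
    refine h.congr_deriv ?_
    rw [hode r hr0, hup r hr0]
    simp only [show k+3-1 = k+2 by omega, Pi.mul_apply, Pi.pow_apply]
    push_cast
    field_simp
    ring
  have hcont₂ : ContinuousWithinAt
      (fun r : ℝ => (1/2) * (deriv u r ^ 2 * r ^ (k+3)) - (1/2) * (u r ^ 2 * r ^ (k+3))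
        + (1/p) * (u r ^ p * r ^ (k+3))) (Ici 0) 0 :=
    (((continuous_const.mul ((hvc.pow 2).mul (continuous_pow _))).sub
      (continuous_const.mul ((huc.pow 2).mul (continuous_pow _)))).add
      (continuous_const.mul (hcup.mul (continuous_pow _)))).continuousWithinAt
  have hint₂ : IntegrableOn (fun r => ((4 - ((k:ℝ)+1))/2) * (deriv u r ^ 2 * r ^ (k+1+1))
      - (((k:ℝ)+3)/2) * (u r ^ 2 * r ^ (k+1+1))
      + (((k:ℝ)+3)/p) * (u r ^ p * r ^ (k+1+1))) (Ioi (0:ℝ)) :=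
    ((((hI_v2 _).const_mul _).sub ((hI_u2 _).const_mul _)).add ((hI_up _).const_mul _))
  have htend₂ : Tendsto
      (fun r : ℝ => (1/2) * (deriv u r ^ 2 * r ^ (k+3)) - (1/2) * (u r ^ 2 * r ^ (k+3))
        + (1/p) * (u r ^ p * r ^ (k+3))) atTop (nhds 0) := by
    have t1 := (decay_tendsto' hc2 hb_v2 (k+3)).const_mul ((1:ℝ)/2)
    have t2 := (decay_tendsto' hc2 hb_u2 (k+3)).const_mul ((1:ℝ)/2)
    have t3 := (decay_tendsto' hcp hb_up (k+3)).const_mul ((1:ℝ)/p)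
    simpa using (t1.sub t2).add t3
  have I₂ := integral_Ioi_of_hasDerivAt_of_tendsto hcont₂ hder₂ hint₂ htend₂
  have J₂ : (∫ r in Ioi (0:ℝ), (((4 - ((k:ℝ)+1))/2) * (deriv u r ^ 2 * r ^ (k+1+1))
      - (((k:ℝ)+3)/2) * (u r ^ 2 * r ^ (k+1+1))
      + (((k:ℝ)+3)/p) * (u r ^ p * r ^ (k+1+1)))) = 0 := by
    rw [I₂]
    norm_num
  have D₂ : (∫ r in Ioi (0:ℝ), (((4 - ((k:ℝ)+1))/2) * (deriv u r ^ 2 * r ^ (k+1+1))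
      - (((k:ℝ)+3)/2) * (u r ^ 2 * r ^ (k+1+1))
      + (((k:ℝ)+3)/p) * (u r ^ p * r ^ (k+1+1))))
      = ((4 - ((k:ℝ)+1))/2) * (∫ r in Ioi (0:ℝ), (deriv u r) ^ 2 * r ^ (k+1+1))
        - (((k:ℝ)+3)/2) * (∫ r in Ioi (0:ℝ), (u r) ^ 2 * r ^ (k+1+1))
        + (((k:ℝ)+3)/p) * (∫ r in Ioi (0:ℝ), u r ^ p * r ^ (k+1+1)) := by
    have h1 : (∫ r in Ioi (0:ℝ), (((4 - ((k:ℝ)+1))/2) * (deriv u r ^ 2 * r ^ (k+1+1))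
        - (((k:ℝ)+3)/2) * (u r ^ 2 * r ^ (k+1+1))
        + (((k:ℝ)+3)/p) * (u r ^ p * r ^ (k+1+1))))
        = (∫ r in Ioi (0:ℝ), (((4 - ((k:ℝ)+1))/2) * (deriv u r ^ 2 * r ^ (k+1+1))
            - (((k:ℝ)+3)/2) * (u r ^ 2 * r ^ (k+1+1))))
          + ∫ r in Ioi (0:ℝ), (((k:ℝ)+3)/p) * (u r ^ p * r ^ (k+1+1)) :=
      integral_add (((hI_v2 _).const_mul _).sub ((hI_u2 _).const_mul _)) ((hI_up _).const_mul _)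
    have h2 : (∫ r in Ioi (0:ℝ), (((4 - ((k:ℝ)+1))/2) * (deriv u r ^ 2 * r ^ (k+1+1))
        - (((k:ℝ)+3)/2) * (u r ^ 2 * r ^ (k+1+1))))
        = (∫ r in Ioi (0:ℝ), ((4 - ((k:ℝ)+1))/2) * (deriv u r ^ 2 * r ^ (k+1+1)))
          - ∫ r in Ioi (0:ℝ), (((k:ℝ)+3)/2) * (u r ^ 2 * r ^ (k+1+1)) :=
      integral_sub ((hI_v2 _).const_mul _) ((hI_u2 _).const_mul _)
    have h3 : (∫ r in Ioi (0:ℝ), ((4 - ((k:ℝ)+1))/2) * (deriv u r ^ 2 * r ^ (k+1+1)))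
        = ((4 - ((k:ℝ)+1))/2) * ∫ r in Ioi (0:ℝ), deriv u r ^ 2 * r ^ (k+1+1) :=
      integral_const_mul _ _
    have h4 : (∫ r in Ioi (0:ℝ), (((k:ℝ)+3)/2) * (u r ^ 2 * r ^ (k+1+1)))
        = (((k:ℝ)+3)/2) * ∫ r in Ioi (0:ℝ), u r ^ 2 * r ^ (k+1+1) := integral_const_mul _ _
    have h5 : (∫ r in Ioi (0:ℝ), (((k:ℝ)+3)/p) * (u r ^ p * r ^ (k+1+1)))
        = (((k:ℝ)+3)/p) * ∫ r in Ioi (0:ℝ), u r ^ p * r ^ (k+1+1) := integral_const_mul _ _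
    rw [h1, h2, h3, h4, h5]
  rw [D₂] at J₂
  constructor
  · push_cast
    linear_combination J₁
  · push_cast
    linear_combination -J₂
end
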